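/- Correspondence of minimizers: with q* = M(r*), the function q* minimizes L^ARM over all q : 𝒮 × 𝒜 → ℝ if and only if r* minimizes r ↦ L^EBM(R_r) over all r : 𝒮 × 𝒜 → ℝ; moreover either condition implies that R_{r*} minimizes L^EBM over all R : 𝒳 × 𝒴 → ℝ. -/
import Mathlib


open Finset

/-! Prompts in a finite set `X`; contexts are a prompt together with fewer than `T`
appended vocabulary tokens; finished responses are such token prefixes followed by
`EOS` (encoded as `none : Option V`). -/

/-- Vocabulary part of a finished response (the response is this prefix followed by EOS). -/
abbrev Resp (V : Type) (T : ℕ) := Σ t : Fin T, Fin (t : ℕ) → V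

/-- Contexts: a prompt extended by fewer than `T` vocabulary tokens. -/
abbrev Ctx (X V : Type) (T : ℕ) := X × Resp V T

/-- Admissible next tokens at a context: only `EOS` (= `none`) at maximal contexts. -/
def adm (X V : Type) [Fintype V] (T : ℕ) (s : Ctx X V T) : Finset (Option V) :=
  if (s.2.1 : ℕ) + 1 = T then {none} else Finset.univ

/-- Soft value `V_q(s) = log ∑_{j admissible at s} exp q(s, j)`. -/
noncomputable def Vq (X V : Type) [Fintype V] (T : ℕ)
    (q : Ctx X V T × Option V → ℝ) (s : Ctx X V T) : ℝ :=
  Real.log (∑ a ∈ adm X V T s, Real.exp (q (s, a)))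

/-- Next-token policy `π_q(j | s) = exp (q(s,j) - V_q(s))`. -/
noncomputable def piq (X V : Type) [Fintype V] (T : ℕ)
    (q : Ctx X V T × Option V → ℝ) (s : Ctx X V T) (a : Option V) : ℝ :=
  Real.exp (q (s, a) - Vq X V T q s)

/-- The strict prefix of length `i` of a finished response `y`. -/
def pref (V : Type) (T : ℕ) (y : Resp V T) (i : Fin (y.1 : ℕ)) : Resp V T :=
  ⟨⟨(i : ℕ), lt_trans i.isLt y.1.isLt⟩, fun j => y.2 (Fin.castLE (le_of_lt i.isLt) j)⟩

/-- The mapping `M` (backward recursion), as a function of the depth of the context. -/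
noncomputable def Mgo (X V : Type) [Fintype V] (T : ℕ) (r : Ctx X V T × Option V → ℝ)
    (x : X) (t : ℕ) (ht : t < T) (s : Fin t → V) (a : Option V) : ℝ :=
  match a with
  | none => r ((x, ⟨⟨t, ht⟩, s⟩), none)
  | some v =>
    r ((x, ⟨⟨t, ht⟩, s⟩), some v) +
      if h : t + 1 < T then
        Real.log (∑ b ∈ adm X V T (x, ⟨⟨t + 1, h⟩, Fin.snoc s v⟩),
          Real.exp (Mgo X V T r x (t + 1) h (Fin.snoc s v) b))
      else 0
termination_by T - t
decreasing_by omega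

/-- The mapping `q = M(r)`: `q(s, EOS) = r(s, EOS)` and
`q(s, y) = r(s, y) + V_q(s ⊕ y)` for a vocabulary token `y`. -/
noncomputable def Mmap (X V : Type) [Fintype V] (T : ℕ)
    (r : Ctx X V T × Option V → ℝ) : Ctx X V T × Option V → ℝ :=
  fun p => Mgo X V T r p.1.1 (p.1.2.1 : ℕ) p.1.2.1.isLt p.1.2.2 p.2

/-- Autoregressive probability `p^ARM_q(y | x)` of the finished response `y ⊕ EOS`. -/
noncomputable def pARM (X V : Type) [Fintype V] (T : ℕ)
    (q : Ctx X V T × Option V → ℝ) (x : X) (y : Resp V T) : ℝ :=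
  (∏ i : Fin (y.1 : ℕ), piq X V T q (x, pref V T y i) (some (y.2 i))) *
    piq X V T q (x, y) none

/-- Negative log-likelihood of the ARM. -/
noncomputable def lARM (X V : Type) [Fintype V] (T : ℕ)
    (q : Ctx X V T × Option V → ℝ) (x : X) (y : Resp V T) : ℝ :=
  - Real.log (pARM X V T q x y)

/-- Sequence-level log-partition `A^EBM_R(x)` of a sequence-level reward `R`. -/
noncomputable def Aebm (X V : Type) [Fintype V] (T : ℕ)
    (R : X × Resp V T → ℝ) (x : X) : ℝ :=
  Real.log (∑ y : Resp V T, Real.exp (R (x, y)))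

/-- Negative log-likelihood `ℓ^EBM_R(x, y) = A^EBM_R(x) - R(x, y)` of the EBM. -/
noncomputable def lEBM (X V : Type) [Fintype V] (T : ℕ)
    (R : X × Resp V T → ℝ) (x : X) (y : Resp V T) : ℝ :=
  Aebm X V T R x - R (x, y)

/-- Decomposable sequence-level reward `R_r(x, y) = ∑_t r(x ⊕ y_{<t}, y_t)`. -/
noncomputable def Rr (X V : Type) [Fintype V] (T : ℕ)
    (r : Ctx X V T × Option V → ℝ) : X × Resp V T → ℝ :=
  fun p =>
    (∑ i : Fin (p.2.1 : ℕ), r ((p.1, pref V T p.2 i), some (p.2.2 i))) + r ((p.1, p.2), none)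

/-- Expected ARM risk under the data distribution `ρ`. -/
noncomputable def LARM (X V : Type) [Fintype X] [Fintype V] (T : ℕ)
    (ρ : X × Resp V T → ℝ) (q : Ctx X V T × Option V → ℝ) : ℝ :=
  ∑ p : X × Resp V T, ρ p * lARM X V T q p.1 p.2

/-- Expected EBM risk under the data distribution `ρ`. -/
noncomputable def LEBM (X V : Type) [Fintype X] [Fintype V] (T : ℕ)
    (ρ : X × Resp V T → ℝ) (R : X × Resp V T → ℝ) : ℝ :=
  ∑ p : X × Resp V T, ρ p * lEBM X V T R p.1 p.2

section Aux

variable {X V : Type} [Fintype V] {T : ℕ}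

lemma adm_none_mem (s : Ctx X V T) : none ∈ adm X V T s := by
  unfold adm; split
  · exact Finset.mem_singleton_self _
  · exact Finset.mem_univ _

lemma sum_exp_pos (q : Ctx X V T × Option V → ℝ) (s : Ctx X V T) :
    0 < ∑ a ∈ adm X V T s, Real.exp (q (s, a)) :=
  Finset.sum_pos (fun _ _ => Real.exp_pos _) ⟨none, adm_none_mem s⟩

lemma exp_Vq (q : Ctx X V T × Option V → ℝ) (s : Ctx X V T) :
    Real.exp (Vq X V T q s) = ∑ a ∈ adm X V T s, Real.exp (q (s, a)) :=
  Real.exp_log (sum_exp_pos q s)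

lemma Mgo_none (r : Ctx X V T × Option V → ℝ) (x : X) (t : ℕ) (ht : t < T) (w : Fin t → V) :
    Mgo X V T r x t ht w none = r ((x, ⟨⟨t, ht⟩, w⟩), none) := by
  rw [Mgo]

lemma Mgo_some (r : Ctx X V T × Option V → ℝ) (x : X) (t : ℕ) (ht : t < T) (w : Fin t → V)
    (v : V) :
    Mgo X V T r x t ht w (some v) = r ((x, ⟨⟨t, ht⟩, w⟩), some v) +
      if h : t + 1 < T then
        Vq X V T (Mmap X V T r) (x, ⟨⟨t + 1, h⟩, Fin.snoc w v⟩)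
      else 0 := by
  rw [Mgo]
  rfl

set_option linter.unusedSectionVars false

lemma Resp.ext' {a b : Fin T} {f : Fin (a:ℕ) → V} {g : Fin (b:ℕ) → V}
    (h : (a:ℕ) = (b:ℕ))
    (hfg : ∀ (j : ℕ) (hj : j < (a:ℕ)) (hj' : j < (b:ℕ)), f ⟨j,hj⟩ = g ⟨j,hj'⟩) :
    (⟨a,f⟩ : Resp V T) = ⟨b,g⟩ := by
  obtain ⟨a, ha⟩ := a; obtain ⟨b, hb⟩ := b
  dsimp at h; subst h
  have : f = g := funext fun j => hfg j j.isLt j.isLt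
  rw [this]

lemma snoc_lt {n : ℕ} (w : Fin n → V) (v : V) (j : ℕ) (hj : j < n) (hj1 : j < n+1) :
    (Fin.snoc w v : Fin (n+1) → V) ⟨j, hj1⟩ = w ⟨j, hj⟩ := by
  have : (⟨j, hj1⟩ : Fin (n+1)) = Fin.castSucc ⟨j, hj⟩ := Fin.ext rfl
  rw [this, Fin.snoc_castSucc]

lemma snoc_eq {n : ℕ} (w : Fin n → V) (v : V) (hj1 : n < n+1) :
    (Fin.snoc w v : Fin (n+1) → V) ⟨n, hj1⟩ = v := by
  have : (⟨n, hj1⟩ : Fin (n+1)) = Fin.last n := Fin.ext rfl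
  rw [this]; exact Fin.snoc_last _ _

noncomputable def Hd (r : Ctx X V T × Option V → ℝ) (x : X) (t : ℕ) (ht : t < T)
    (w : Fin t → V) : ℝ :=
  ∑ i : Fin t, r ((x, pref V T ⟨⟨t,ht⟩,w⟩ i), some (w i))

open Classical in
noncomputable def ExtS (r : Ctx X V T × Option V → ℝ) (x : X) (t : ℕ) (w : Fin t → V)
    (y : Resp V T) : ℝ :=
  if (∀ i : Fin t, ∃ hi : (i:ℕ) < (y.1:ℕ), y.2 ⟨(i:ℕ), hi⟩ = w i)
  then Real.exp (Rr X V T r (x,y)) else 0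

lemma Hd_snoc (r : Ctx X V T × Option V → ℝ) (x : X) (t : ℕ) (ht : t < T) (h1 : t+1 < T)
    (w : Fin t → V) (v : V) :
    Hd r x (t+1) h1 (Fin.snoc w v) = Hd r x t ht w + r ((x, ⟨⟨t,ht⟩,w⟩), some v) := by
  unfold Hd
  rw [Fin.sum_univ_castSucc]
  congr 1
  · apply Finset.sum_congr rfl; intro i _
    have h2 : pref V T ⟨⟨t+1,h1⟩, Fin.snoc w v⟩ (Fin.castSucc i) = pref V T ⟨⟨t,ht⟩,w⟩ i := by
      apply Resp.ext' rfl
      intro j hj hj'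
      dsimp only [pref]
      simp only [Fin.castLE_mk]
      have hj2 : j < t := lt_trans (by simpa using hj) i.isLt
      rw [snoc_lt w v j hj2]
    rw [h2, Fin.snoc_castSucc]
  · have h2 : pref V T ⟨⟨t+1,h1⟩, Fin.snoc w v⟩ (Fin.last t) = ⟨⟨t,ht⟩,w⟩ := by
      apply Resp.ext' rfl
      intro j hj hj'
      dsimp only [pref]
      simp only [Fin.castLE_mk]
      have hj2 : j < t := by simpa using hj
      rw [snoc_lt w v j hj2]
    rw [h2]
    have h3 : (Fin.snoc w v : Fin (t+1) → V) (Fin.last t) = v := Fin.snoc_last _ _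
    rw [h3]

lemma cond_iff_eq (t : ℕ) (ht : t < T) (w : Fin t → V) (y : Resp V T)
    (hy1 : (y.1:ℕ) = t) :
    (∀ i : Fin t, ∃ hi : (i:ℕ) < (y.1:ℕ), y.2 ⟨(i:ℕ), hi⟩ = w i) ↔ y = ⟨⟨t,ht⟩,w⟩ := by
  obtain ⟨⟨τ,hτ⟩,f⟩ := y
  dsimp at hy1; subst hy1
  constructor
  · intro hP
    apply Resp.ext' rfl
    intro j hj hj'
    obtain ⟨hi, he⟩ := hP ⟨j, hj'⟩
    exact he
  · intro he i
    have hf : f = w := by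
      exact eq_of_heq (Sigma.ext_iff.mp he).2
    subst hf
    exact ⟨i.isLt, congrArg f (Fin.ext rfl)⟩

lemma cond_false_of_lt (t : ℕ) (w : Fin t → V) (y : Resp V T) (hy1 : (y.1:ℕ) < t) :
    ¬ (∀ i : Fin t, ∃ hi : (i:ℕ) < (y.1:ℕ), y.2 ⟨(i:ℕ), hi⟩ = w i) := by
  intro hP
  obtain ⟨hi, -⟩ := hP ⟨(y.1:ℕ), hy1⟩
  exact lt_irrefl _ hi

lemma ne_of_len {t : ℕ} {ht : t < T} {w : Fin t → V} {y : Resp V T} (h : (y.1:ℕ) ≠ t) :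
    y ≠ (⟨⟨t,ht⟩,w⟩ : Resp V T) := by
  intro he; apply h
  rw [he]

open Classical in
lemma ExtS_term (r : Ctx X V T × Option V → ℝ) (x : X) (t : ℕ) (ht : t < T)
    (hT1 : ¬ t + 1 < T) (w : Fin t → V) (y : Resp V T) :
    ExtS r x t w y
      = if y = (⟨⟨t,ht⟩,w⟩ : Resp V T) then Real.exp (Rr X V T r (x,y)) else 0 := by
  classical
  unfold ExtS
  rcases lt_trichotomy (y.1:ℕ) t with h | h | h
  · rw [if_neg (cond_false_of_lt t w y h), if_neg (ne_of_len (by omega))]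
  · by_cases hc : (∀ i : Fin t, ∃ hi : (i:ℕ) < (y.1:ℕ), y.2 ⟨(i:ℕ), hi⟩ = w i)
    · rw [if_pos hc, if_pos ((cond_iff_eq t ht w y h).1 hc)]
    · rw [if_neg hc, if_neg (fun he => hc ((cond_iff_eq t ht w y h).2 he))]
  · exact absurd y.1.isLt (by omega)

lemma ExtS_zero_of_lt (r : Ctx X V T × Option V → ℝ) (x : X) (t : ℕ) (w : Fin t → V)
    (y : Resp V T) (hy1 : (y.1:ℕ) < t) : ExtS r x t w y = 0 := by
  unfold ExtS
  exact if_neg (cond_false_of_lt t w y hy1)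

open Classical in
lemma ExtS_split (r : Ctx X V T × Option V → ℝ) (x : X) (t : ℕ) (ht1 : t + 1 < T)
    (w : Fin t → V) (y : Resp V T) :
    ExtS r x t w y
      = (if y = (⟨⟨t, Nat.lt_of_succ_lt ht1⟩,w⟩ : Resp V T)
          then Real.exp (Rr X V T r (x,y)) else 0)
        + ∑ v : V, ExtS r x (t+1) (Fin.snoc w v) y := by
  classical
  rcases lt_trichotomy (y.1:ℕ) t with h | h | h
  · rw [if_neg (ne_of_len (by omega))]
    have hz : ∀ v : V, ExtS r x (t+1) (Fin.snoc w v) y = 0 :=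
      fun v => ExtS_zero_of_lt r x (t+1) (Fin.snoc w v) y (by omega)
    simp only [hz, Finset.sum_const_zero, add_zero, zero_add]
    exact ExtS_zero_of_lt r x t w y h
  · have hz : ∀ v : V, ExtS r x (t+1) (Fin.snoc w v) y = 0 :=
      fun v => ExtS_zero_of_lt r x (t+1) (Fin.snoc w v) y (by omega)
    simp only [hz, Finset.sum_const_zero, add_zero]
    unfold ExtS
    by_cases hc : (∀ i : Fin t, ∃ hi : (i:ℕ) < (y.1:ℕ), y.2 ⟨(i:ℕ), hi⟩ = w i)
    · rw [if_pos hc, if_pos ((cond_iff_eq t _ w y h).1 hc)]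
    · rw [if_neg hc, if_neg (fun he => hc ((cond_iff_eq t _ w y h).2 he))]
  · rw [if_neg (ne_of_len (by omega))]
    obtain ⟨⟨τ,hτ⟩,f⟩ := y
    dsimp at h
    have key : ∀ v : V, ExtS r x (t+1) (Fin.snoc w v) ⟨⟨τ,hτ⟩,f⟩
        = if v = f ⟨t, h⟩ then ExtS r x t w ⟨⟨τ,hτ⟩,f⟩ else 0 := by
      intro v
      by_cases hv : v = f ⟨t, h⟩
      · rw [if_pos hv]; subst hv
        unfold ExtS
        by_cases hc : (∀ i : Fin t, ∃ hi : (i:ℕ) < τ, f ⟨(i:ℕ), hi⟩ = w i)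
        · rw [if_pos hc]
          rw [if_pos]
          intro i
          obtain ⟨iv, hiv⟩ := i
          rcases Nat.lt_or_ge iv t with hit | hit
          · obtain ⟨hi, he⟩ := hc ⟨iv, hit⟩
            refine ⟨lt_trans hit h, ?_⟩
            rw [snoc_lt w _ iv hit]
            exact he
          · have hit' : iv = t := by omega
            subst hit'
            refine ⟨h, ?_⟩
            rw [snoc_eq]
        · rw [if_neg hc]
          rw [if_neg]
          intro hP
          apply hc
          intro i
          obtain ⟨hi, he⟩ := hP ⟨(i:ℕ), by omega⟩
          rw [snoc_lt w _ (i:ℕ) i.isLt] at he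
          exact ⟨hi, he⟩
      · rw [if_neg hv]
        unfold ExtS
        rw [if_neg]
        intro hP
        apply hv
        obtain ⟨hi, he⟩ := hP ⟨t, by omega⟩
        rw [snoc_eq] at he
        rw [← he]
    rw [Finset.sum_congr rfl (fun v _ => key v), Finset.sum_ite_eq' Finset.univ (f ⟨t,h⟩)]
    rw [if_pos (Finset.mem_univ _), zero_add]

lemma adm_eq_univ (x : X) (t : ℕ) (ht : t < T) (h1 : t + 1 < T) (w : Fin t → V) :
    adm X V T ((x, ⟨⟨t,ht⟩,w⟩) : Ctx X V T) = Finset.univ := by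
  unfold adm
  rw [if_neg]
  intro he
  dsimp at he
  omega

lemma adm_eq_none (x : X) (t : ℕ) (ht : t < T) (h1 : ¬ t + 1 < T) (w : Fin t → V) :
    adm X V T ((x, ⟨⟨t,ht⟩,w⟩) : Ctx X V T) = {none} := by
  unfold adm
  rw [if_pos]
  dsimp
  omega

theorem sum_ExtS (r : Ctx X V T × Option V → ℝ) (x : X) (t : ℕ) (ht : t < T)
    (w : Fin t → V) :
    ∑ y : Resp V T, ExtS r x t w y
      = Real.exp (Hd r x t ht w + Vq X V T (Mmap X V T r) (x, ⟨⟨t,ht⟩,w⟩)) := by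
  classical
  have e0 : Mmap X V T r ((x,⟨⟨t,ht⟩,w⟩), none) = r ((x,⟨⟨t,ht⟩,w⟩), none) :=
    Mgo_none r x t ht w
  by_cases h1 : t + 1 < T
  · have e1 : ∀ v : V, Mmap X V T r ((x,⟨⟨t,ht⟩,w⟩), some v)
        = r ((x,⟨⟨t,ht⟩,w⟩), some v)
          + Vq X V T (Mmap X V T r) (x, ⟨⟨t+1,h1⟩, Fin.snoc w v⟩) := by
      intro v
      have : Mmap X V T r ((x,⟨⟨t,ht⟩,w⟩), some v) = Mgo X V T r x t ht w (some v) := rfl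
      rw [this, Mgo_some, dif_pos h1]
    have step1 : ∑ y : Resp V T, ExtS r x t w y
        = Real.exp (Rr X V T r (x, ⟨⟨t,ht⟩,w⟩))
          + ∑ v : V, ∑ y : Resp V T, ExtS r x (t+1) (Fin.snoc w v) y := by
      rw [Finset.sum_congr rfl (fun y _ => ExtS_split r x t h1 w y),
        Finset.sum_add_distrib, Finset.sum_ite_eq' Finset.univ, if_pos (Finset.mem_univ _),
        Finset.sum_comm]
    rw [step1]
    have step2 : ∀ v : V, ∑ y : Resp V T, ExtS r x (t+1) (Fin.snoc w v) y
        = Real.exp ((Hd r x t ht w + r ((x,⟨⟨t,ht⟩,w⟩), some v))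
            + Vq X V T (Mmap X V T r) (x, ⟨⟨t+1,h1⟩, Fin.snoc w v⟩)) := by
      intro v
      rw [sum_ExtS r x (t+1) h1 (Fin.snoc w v), Hd_snoc r x t ht h1 w v]
    rw [Finset.sum_congr rfl (fun v _ => step2 v)]
    rw [Real.exp_add, exp_Vq, adm_eq_univ x t ht h1 w]
    have : ∑ a ∈ (Finset.univ : Finset (Option V)),
        Real.exp (Mmap X V T r ((x,⟨⟨t,ht⟩,w⟩), a))
        = Real.exp (Mmap X V T r ((x,⟨⟨t,ht⟩,w⟩), none))
          + ∑ v : V, Real.exp (Mmap X V T r ((x,⟨⟨t,ht⟩,w⟩), some v)) := by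
      exact Fintype.sum_option _
    rw [this, e0]
    have hRr : Rr X V T r (x, ⟨⟨t,ht⟩,w⟩)
        = Hd r x t ht w + r ((x,⟨⟨t,ht⟩,w⟩), none) := rfl
    simp only [e1, hRr, Real.exp_add, mul_add, Finset.mul_sum, mul_assoc]
  · have hterm : ∀ y : Resp V T, ExtS r x t w y
        = if y = (⟨⟨t,ht⟩,w⟩ : Resp V T) then Real.exp (Rr X V T r (x,y)) else 0 :=
      ExtS_term r x t ht h1 w
    rw [Finset.sum_congr rfl (fun y _ => hterm y), Finset.sum_ite_eq' Finset.univ,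
      if_pos (Finset.mem_univ _)]
    have hVq : Vq X V T (Mmap X V T r) (x, ⟨⟨t,ht⟩,w⟩) = r ((x,⟨⟨t,ht⟩,w⟩), none) := by
      unfold Vq
      rw [adm_eq_none x t ht h1 w, Finset.sum_singleton, e0, Real.log_exp]
    rw [hVq]
    rfl
termination_by T - t
decreasing_by omega

lemma Aebm_eq (r : Ctx X V T × Option V → ℝ) (x : X) (h0 : 0 < T) (w0 : Fin 0 → V) :
    Real.log (∑ y : Resp V T, Real.exp (Rr X V T r (x,y)))
      = Vq X V T (Mmap X V T r) (x, ⟨⟨0,h0⟩,w0⟩) := by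
  classical
  have he : ∀ y : Resp V T, Real.exp (Rr X V T r (x,y)) = ExtS r x 0 w0 y := fun y => by
    unfold ExtS
    rw [if_pos (fun i => i.elim0)]
  rw [Finset.sum_congr rfl (fun y _ => he y), sum_ExtS r x 0 h0 w0]
  have hHd : Hd r x 0 h0 w0 = 0 := by
    unfold Hd
    simp
  rw [hHd, zero_add, Real.log_exp]

lemma lARM_eq_lEBM (r : Ctx X V T × Option V → ℝ) (x : X) (y : Resp V T) :
    lARM X V T (Mmap X V T r) x y = lEBM X V T (Rr X V T r) x y := by
  classical
  obtain ⟨⟨τ,hτ⟩,f⟩ := y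
  set q := Mmap X V T r with hq
  set Y : Resp V T := ⟨⟨τ,hτ⟩,f⟩ with hY
  set φ : ℕ → ℝ := fun k =>
    if hk : k ≤ τ then
      Vq X V T q (x, ⟨⟨k, lt_of_le_of_lt hk hτ⟩, fun j => f ⟨(j:ℕ), lt_of_lt_of_le j.isLt hk⟩⟩)
    else 0 with hφ
  -- pointwise rewrite of the exponents
  have hterm : ∀ i : Fin τ,
      q ((x, pref V T Y i), some (Y.2 i)) - Vq X V T q (x, pref V T Y i)
        = r ((x, pref V T Y i), some (f i)) + (φ ((i:ℕ)+1) - φ (i:ℕ)) := by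
    intro i
    have hi1 : (i:ℕ) + 1 < T := by have := i.isLt; omega
    have hq1 : q ((x, pref V T Y i), some (Y.2 i))
        = r ((x, pref V T Y i), some (f i))
          + Vq X V T q (x, ⟨⟨(i:ℕ)+1, hi1⟩,
              Fin.snoc (fun j => f (Fin.castLE (le_of_lt i.isLt) j)) (f i)⟩) := by
      have h0 : q ((x, pref V T Y i), some (Y.2 i))
          = Mgo X V T r x (i:ℕ) (lt_trans i.isLt hτ)
              (fun j => f (Fin.castLE (le_of_lt i.isLt) j)) (some (f i)) := rfl
      rw [h0, Mgo_some, dif_pos hi1]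
      rfl
    have hctx : (⟨⟨(i:ℕ)+1, hi1⟩,
          Fin.snoc (fun j => f (Fin.castLE (le_of_lt i.isLt) j)) (f i)⟩ : Resp V T)
        = ⟨⟨(i:ℕ)+1, hi1⟩, fun j => f ⟨(j:ℕ), lt_of_lt_of_le j.isLt i.isLt⟩⟩ := by
      apply Resp.ext' rfl
      intro j hj hj'
      rcases Nat.lt_or_ge j (i:ℕ) with hji | hji
      · rw [snoc_lt _ _ j hji]
        exact congrArg f (Fin.ext rfl)
      · have hj2 : j < (i:ℕ)+1 := by simpa using hj
        have hji' : j = (i:ℕ) := by omega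
        subst hji'
        rw [snoc_eq]
    have hφ1 : φ ((i:ℕ)+1) = Vq X V T q (x, ⟨⟨(i:ℕ)+1, hi1⟩,
        fun j => f ⟨(j:ℕ), lt_of_lt_of_le j.isLt i.isLt⟩⟩) := by
      simp only [hφ]
      rw [dif_pos (Nat.succ_le_of_lt i.isLt)]
    have hφ0 : Vq X V T q (x, pref V T Y i) = φ (i:ℕ) := by
      simp only [hφ]
      rw [dif_pos (le_of_lt i.isLt)]
      rfl
    rw [hq1, hctx, ← hφ1, hφ0]
    ring
  have hnone : q ((x, Y), none) = r ((x, Y), none) := Mgo_none r x τ hτ f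
  have hφτ : Vq X V T q (x, Y) = φ τ := by
    simp only [hφ]
    rw [dif_pos (le_refl τ)]
  -- assemble
  unfold lARM lEBM Aebm pARM piq
  rw [← Real.exp_sum, ← Real.exp_add, Real.log_exp]
  rw [Finset.sum_congr rfl (fun i _ => hterm i), Finset.sum_add_distrib]
  have htel : ∑ i : Fin τ, (φ ((i:ℕ)+1) - φ (i:ℕ)) = φ τ - φ 0 := by
    rw [Fin.sum_univ_eq_sum_range (fun k => φ (k+1) - φ k) τ]
    exact Finset.sum_range_sub φ τ
  rw [htel, hnone, hφτ]
  have hA : Real.log (∑ z : Resp V T, Real.exp (Rr X V T r (x,z))) = φ 0 := by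
    have := Aebm_eq r x (lt_of_le_of_lt (Nat.zero_le τ) hτ)
      (fun j => f ⟨(j:ℕ), lt_of_lt_of_le j.isLt (Nat.zero_le τ)⟩)
    rw [this]
    simp only [hφ]
    rw [dif_pos (Nat.zero_le τ)]
  rw [hA]
  have hRr : Rr X V T r (x, Y)
      = (∑ i : Fin τ, r ((x, pref V T Y i), some (f i))) + r ((x, Y), none) := rfl
  rw [hRr]
  ring

noncomputable def rinv (q : Ctx X V T × Option V → ℝ) : Ctx X V T × Option V → ℝ :=
  fun p => match p.2 with
  | none => q (p.1, none)
  | some v => q (p.1, some v) -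
      (if h : (p.1.2.1 : ℕ) + 1 < T then
        Vq X V T q (p.1.1, ⟨⟨(p.1.2.1:ℕ)+1, h⟩, Fin.snoc p.1.2.2 v⟩) else 0)

theorem Mgo_rinv (q : Ctx X V T × Option V → ℝ) (x : X) (t : ℕ) (ht : t < T)
    (w : Fin t → V) (a : Option V) :
    Mgo X V T (rinv q) x t ht w a = q ((x, ⟨⟨t,ht⟩,w⟩), a) := by
  match a with
  | none =>
    rw [Mgo_none]
    rfl
  | some v =>
    rw [Mgo]
    have hr : rinv q ((x, ⟨⟨t,ht⟩,w⟩), some v)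
        = q ((x, ⟨⟨t,ht⟩,w⟩), some v) -
          (if h : t + 1 < T then
            Vq X V T q (x, ⟨⟨t+1, h⟩, Fin.snoc w v⟩) else 0) := rfl
    rw [hr]
    by_cases h : t + 1 < T
    · rw [dif_pos h, dif_pos h]
      have hsum : ∀ b : Option V, Mgo X V T (rinv q) x (t+1) h (Fin.snoc w v) b
          = q ((x, ⟨⟨t+1,h⟩, Fin.snoc w v⟩), b) := fun b =>
        Mgo_rinv q x (t+1) h (Fin.snoc w v) b
      have : Real.log (∑ b ∈ adm X V T ((x, ⟨⟨t+1,h⟩, Fin.snoc w v⟩) : Ctx X V T),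
          Real.exp (Mgo X V T (rinv q) x (t+1) h (Fin.snoc w v) b))
          = Vq X V T q (x, ⟨⟨t+1,h⟩, Fin.snoc w v⟩) := by
        unfold Vq
        rw [Finset.sum_congr rfl (fun b _ => by rw [hsum b])]
      rw [this]
      ring
    · rw [dif_neg h, dif_neg h]
      ring
termination_by T - t
decreasing_by omega

theorem Mmap_rinv (q : Ctx X V T × Option V → ℝ) : Mmap X V T (rinv q) = q := by
  funext p
  obtain ⟨⟨x, ⟨⟨t,ht⟩, w⟩⟩, a⟩ := p
  exact Mgo_rinv q x t ht w a


noncomputable def rofR (R : X × Resp V T → ℝ) : Ctx X V T × Option V → ℝ :=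
  fun p => match p.2 with
  | none => R p.1
  | some _ => 0

lemma Rr_rofR (R : X × Resp V T → ℝ) : Rr X V T (rofR R) = R := by
  funext p
  unfold Rr
  have h1 : ∀ i : Fin (p.2.1:ℕ), rofR R ((p.1, pref V T p.2 i), some (p.2.2 i)) = 0 :=
    fun i => rfl
  rw [Finset.sum_congr rfl (fun i _ => h1 i), Finset.sum_const_zero, zero_add]
  rfl

end Aux

/-- **Correspondence of minimizers.**
With `q* = M(r*)`: `q*` minimizes `L^ARM` over all `q` if and only if `r*` minimizes
`r ↦ L^EBM(R_r)` over all `r`; moreover either condition implies that `R_{r*}`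
minimizes `L^EBM` over all sequence-level rewards `R : 𝒳 × 𝒴 → ℝ`. -/
theorem correspondence_of_minimizers (X V : Type) [Fintype X] [Fintype V] (T : ℕ)
    (hT : 1 ≤ T) (ρ : X × Resp V T → ℝ) (hρ0 : ∀ p, 0 ≤ ρ p) (hρ1 : ∑ p, ρ p = 1)
    (rstar qstar : Ctx X V T × Option V → ℝ) (hqstar : qstar = Mmap X V T rstar) :
    ((∀ q : Ctx X V T × Option V → ℝ, LARM X V T ρ qstar ≤ LARM X V T ρ q) ↔
      (∀ r : Ctx X V T × Option V → ℝ,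
        LEBM X V T ρ (Rr X V T rstar) ≤ LEBM X V T ρ (Rr X V T r))) ∧
    ((∀ q : Ctx X V T × Option V → ℝ, LARM X V T ρ qstar ≤ LARM X V T ρ q) →
      ∀ R : X × Resp V T → ℝ, LEBM X V T ρ (Rr X V T rstar) ≤ LEBM X V T ρ R) := by
  have hM : ∀ r' : Ctx X V T × Option V → ℝ,
      LARM X V T ρ (Mmap X V T r') = LEBM X V T ρ (Rr X V T r') := by
    intro r'
    unfold LARM LEBM
    exact Finset.sum_congr rfl (fun p _ => by rw [lARM_eq_lEBM])
  have hfwd : (∀ q : Ctx X V T × Option V → ℝ, LARM X V T ρ qstar ≤ LARM X V T ρ q) →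
      (∀ r : Ctx X V T × Option V → ℝ,
        LEBM X V T ρ (Rr X V T rstar) ≤ LEBM X V T ρ (Rr X V T r)) := by
    intro hq r
    calc LEBM X V T ρ (Rr X V T rstar) = LARM X V T ρ qstar := by rw [hqstar, hM rstar]
      _ ≤ LARM X V T ρ (Mmap X V T r) := hq _
      _ = LEBM X V T ρ (Rr X V T r) := hM r
  constructor
  · constructor
    · exact hfwd
    · intro hr q
      calc LARM X V T ρ qstar = LEBM X V T ρ (Rr X V T rstar) := by rw [hqstar, hM rstar]
        _ ≤ LEBM X V T ρ (Rr X V T (rinv q)) := hr _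
        _ = LARM X V T ρ (Mmap X V T (rinv q)) := (hM _).symm
        _ = LARM X V T ρ q := by rw [Mmap_rinv]
  · intro hq R
    have := hfwd hq (rofR R)
    rwa [Rr_rofR R] at this
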